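/- If u is a weak Pareto optimum of the vector optimization problem for continuously differentiable functions f_1,...,f_q on a Hilbert space H (i.e. there is no v with f_i(v) < f_i(u) for all i), then 0 belongs to the convex hull of the gradients {∇f_1(u),...,∇f_q(u)}. -/

import Mathlib

open scoped RealInnerProductSpace

open InnerProductSpace Filter

/-- Fermat's rule: a weak Pareto optimum of the multi-objective problem satisfies
`0 ∈ co {∇f₁(u), ..., ∇f_q(u)}`. -/
theorem weak_pareto_fermat
    {H : Type*} [NormedAddCommGroup H] [InnerProductSpace ℝ H] [CompleteSpace H]
    {q : ℕ} (f : Fin q → H → ℝ) (hf : ∀ i, ContDiff ℝ 1 (f i)) (u : H)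
    (hpareto : ¬ ∃ v : H, ∀ i, f i v < f i u) :
    (0 : H) ∈ convexHull ℝ (Set.range fun i => gradient (f i) u) := by
  by_contra h0
  -- separate 0 from the compact convex hull
  obtain ⟨φ, c, hc0, hc⟩ :=
    geometric_hahn_banach_point_closed (convex_convexHull ℝ _)
      ((Set.Finite.isCompact_convexHull (𝕜 := ℝ) (Set.finite_range _)).isClosed) h0
  simp only [map_zero] at hc0
  set v : H := (toDual ℝ H).symm φ with hv
  have hφ : ∀ w : H, φ w = ⟪v, w⟫ := by
    intro w
    rw [hv]
    conv_lhs => rw [← (toDual ℝ H).apply_symm_apply φ]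
    rfl
  -- each f i decreases along direction -v
  have key : ∀ i : Fin q, ∀ᶠ t in nhdsWithin (0 : ℝ) (Set.Ioi 0),
      f i (u - t • v) < f i u := by
    intro i
    have hdiff : DifferentiableAt ℝ (f i) u :=
      ((hf i).differentiable one_ne_zero).differentiableAt
    have hgrad : HasFDerivAt (f i) (toDual ℝ H (gradient (f i) u)) u :=
      hdiff.hasGradientAt.hasFDerivAt
    have hcurve : HasDerivAt (fun t : ℝ => u - t • v) (-v) 0 := by
      simpa using ((hasDerivAt_id (0:ℝ)).smul_const v).const_sub u
    have hg : HasDerivAt (fun t : ℝ => f i (u - t • v))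
        (toDual ℝ H (gradient (f i) u) (-v)) 0 := by
      have hgrad' : HasFDerivAt (f i) (toDual ℝ H (gradient (f i) u)) (u - (0:ℝ) • v) := by
        simpa using hgrad
      have := hgrad'.comp_hasDerivAt 0 hcurve
      exact this
    have hneg : toDual ℝ H (gradient (f i) u) (-v) < 0 := by
      have h1 : c < φ (gradient (f i) u) :=
        hc _ (subset_convexHull ℝ _ (Set.mem_range_self i))
      have h2 : toDual ℝ H (gradient (f i) u) v = φ (gradient (f i) u) := by
        rw [toDual_apply_apply, real_inner_comm, ← hφ]
      have : (0:ℝ) < toDual ℝ H (gradient (f i) u) v := by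
        rw [h2]; linarith
      rw [map_neg]; linarith
    -- slope argument
    have hslope := hasDerivAt_iff_tendsto_slope.1 hg
    have hslope' : Tendsto (slope (fun t : ℝ => f i (u - t • v)) 0)
        (nhdsWithin (0:ℝ) (Set.Ioi 0)) (nhds (toDual ℝ H (gradient (f i) u) (-v))) :=
      hslope.mono_left (nhdsWithin_mono 0 (fun t ht => ne_of_gt ht))
    have hev : ∀ᶠ t in nhdsWithin (0:ℝ) (Set.Ioi 0),
        slope (fun t : ℝ => f i (u - t • v)) 0 t < 0 :=
      hslope' (Iio_mem_nhds hneg)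
    filter_upwards [hev, self_mem_nhdsWithin] with t ht htpos
    have htpos' : (0:ℝ) < t := htpos
    rw [slope_def_field] at ht
    have : (f i (u - t • v) - f i (u - (0:ℝ) • v)) / (t - 0) < 0 := ht
    have hnum : f i (u - t • v) - f i (u - (0:ℝ) • v) < 0 := by
      by_contra hge
      push_neg at hge
      have := div_nonneg hge (by linarith : (0:ℝ) ≤ t - 0)
      linarith
    simpa using hnum
  obtain ⟨t, ht⟩ := (eventually_all.2 key).exists
  exact hpareto ⟨u - t • v, ht⟩
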